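/- Let c₁ = 2/√3, c₂ = −1/√3 + i, c₃ = −1/√3 − i in ℂ and r = 1/√3, and define g₁(z) = 2/√3 + 1/(3z − 2√3), g₂(z) = −1/√3 + i + e^{−2πi/3}/(3z + √3 − 3i), g₃(z) = −1/√3 − i + e^{2πi/3}/(3z + √3 + 3i). Then the three closed disks B̄(c_j, r) are pairwise disjoint, and for all i ≠ j in {1,2,3}, the map g_j sends the closed disk B̄(c_i, r) into the open disk B(c_j, r). -/

import Mathlib

open Complex Metric

/-- Centers of the three Schottky disks. -/
noncomputable def schottkyCenter : Fin 3 → ℂ :=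
  ![2 / Real.sqrt 3, -1 / Real.sqrt 3 + I, -1 / Real.sqrt 3 - I]

/-- The three Schottky generators. -/
noncomputable def schottkyMap : Fin 3 → ℂ → ℂ :=
  ![fun z => 2 / Real.sqrt 3 + 1 / (3 * z - 2 * Real.sqrt 3),
    fun z => -1 / Real.sqrt 3 + I +
      Complex.exp (-2 * Real.pi * I / 3) / (3 * z + Real.sqrt 3 - 3 * I),
    fun z => -1 / Real.sqrt 3 - I +
      Complex.exp (2 * Real.pi * I / 3) / (3 * z + Real.sqrt 3 + 3 * I)]

lemma schottky_key (c z ω : ℂ) (hω : ‖ω‖ = 1)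
    (hz : 2 - 1 / Real.sqrt 3 ≤ ‖z - c‖) :
    c + ω / (3 * (z - c)) ∈ Metric.ball c (1 / Real.sqrt 3) := by
  have h3 : (1:ℝ) < Real.sqrt 3 := by
    rw [show (1:ℝ) = Real.sqrt 1 by simp]
    exact Real.sqrt_lt_sqrt (by norm_num) (by norm_num)
  have hs0 : 0 < Real.sqrt 3 := by positivity
  have hsq : Real.sqrt 3 * Real.sqrt 3 = 3 := Real.mul_self_sqrt (by norm_num)
  have hr : 0 < 2 - 1 / Real.sqrt 3 := by
    have : 1 / Real.sqrt 3 < 1 := by rw [div_lt_one hs0]; exact h3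
    linarith
  have ha : 0 < ‖z - c‖ := lt_of_lt_of_le hr hz
  rw [Metric.mem_ball, Complex.dist_eq, add_sub_cancel_left, norm_div, norm_mul, hω]
  have h3' : ‖(3:ℂ)‖ = 3 := by simp
  rw [h3', div_lt_div_iff₀ (by positivity) hs0]
  have h1 : (1 / Real.sqrt 3) * Real.sqrt 3 = 1 := by field_simp
  nlinarith [mul_le_mul_of_nonneg_right hz hs0.le, hsq, ha, hs0, h1, h3]

lemma schottky_dist : ∀ i j : Fin 3, i ≠ j →
    dist (schottkyCenter i) (schottkyCenter j) = 2 := by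
  have hsq : Real.sqrt 3 * Real.sqrt 3 = 3 := Real.mul_self_sqrt (by norm_num)
  have hs0 : 0 < Real.sqrt 3 := Real.sqrt_pos.2 (by norm_num)
  have key : ∀ w : ℂ, w.re * w.re + w.im * w.im = 4 → ‖w‖ = 2 := by
    intro w hw
    rw [Complex.norm_def, Complex.normSq_apply, hw,
      show (4:ℝ) = 2^2 by norm_num, Real.sqrt_sq (by norm_num)]
  have d01 : dist (schottkyCenter 0) (schottkyCenter 1) = 2 := by
    rw [Complex.dist_eq]
    apply key
    simp only [schottkyCenter, Matrix.cons_val_zero, Matrix.cons_val_one, Matrix.head_cons,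
      Complex.sub_re, Complex.sub_im, Complex.add_re, Complex.add_im, Complex.I_re,
      Complex.I_im, Complex.div_re, Complex.div_im, Complex.normSq_apply, Complex.ofReal_re,
      Complex.ofReal_im, Complex.neg_re, Complex.neg_im, Complex.one_re, Complex.one_im]
    field_simp
    simp only [Complex.re_ofNat, Complex.im_ofNat]
    nlinarith [hsq, hs0]
  have d02 : dist (schottkyCenter 0) (schottkyCenter 2) = 2 := by
    rw [Complex.dist_eq]
    apply key
    simp only [schottkyCenter, Matrix.cons_val_zero, Matrix.cons_val_one, Matrix.head_cons,
      Matrix.cons_val_two, Matrix.tail_cons,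
      Complex.sub_re, Complex.sub_im, Complex.add_re, Complex.add_im, Complex.I_re,
      Complex.I_im, Complex.div_re, Complex.div_im, Complex.normSq_apply, Complex.ofReal_re,
      Complex.ofReal_im, Complex.neg_re, Complex.neg_im, Complex.one_re, Complex.one_im]
    field_simp
    simp only [Complex.re_ofNat, Complex.im_ofNat]
    nlinarith [hsq, hs0]
  have d12 : dist (schottkyCenter 1) (schottkyCenter 2) = 2 := by
    rw [Complex.dist_eq]
    apply key
    simp only [schottkyCenter, Matrix.cons_val_zero, Matrix.cons_val_one, Matrix.head_cons,
      Matrix.cons_val_two, Matrix.tail_cons,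
      Complex.sub_re, Complex.sub_im, Complex.add_re, Complex.add_im, Complex.I_re,
      Complex.I_im, Complex.div_re, Complex.div_im, Complex.normSq_apply, Complex.ofReal_re,
      Complex.ofReal_im, Complex.neg_re, Complex.neg_im, Complex.one_re, Complex.one_im]
    ring_nf
  intro i j hij
  fin_cases i <;> fin_cases j <;>
    first
      | exact absurd rfl hij
      | exact d01
      | exact d02
      | exact d12
      | exact (dist_comm _ _).trans d01
      | exact (dist_comm _ _).trans d02
      | exact (dist_comm _ _).trans d12

/-- The three closed disks `B̄(c_j, 1/√3)` are pairwise disjoint, and for `i ≠ j` the map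
`g_j` sends `B̄(c_i, 1/√3)` into the open disk `B(c_j, 1/√3)`. -/
theorem schottky_disks_disjoint_and_mapsTo :
    (∀ i j : Fin 3, i ≠ j →
      Disjoint (closedBall (schottkyCenter i) (1 / Real.sqrt 3))
        (closedBall (schottkyCenter j) (1 / Real.sqrt 3))) ∧
    (∀ i j : Fin 3, i ≠ j →
      Set.MapsTo (schottkyMap j) (closedBall (schottkyCenter i) (1 / Real.sqrt 3))
        (ball (schottkyCenter j) (1 / Real.sqrt 3))) := by
  have h3 : (1:ℝ) < Real.sqrt 3 := by
    rw [show (1:ℝ) = Real.sqrt 1 by simp]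
    exact Real.sqrt_lt_sqrt (by norm_num) (by norm_num)
  have hs0 : 0 < Real.sqrt 3 := by positivity
  have hsq : Real.sqrt 3 * Real.sqrt 3 = 3 := Real.mul_self_sqrt (by norm_num)
  have hsc : ((Real.sqrt 3 : ℝ) : ℂ) * ((Real.sqrt 3 : ℝ) : ℂ) = 3 := by
    norm_cast
  have hscne : ((Real.sqrt 3 : ℝ) : ℂ) ≠ 0 := Complex.ofReal_ne_zero.2 hs0.ne'
  constructor
  · intro i j hij
    apply Metric.closedBall_disjoint_closedBall
    rw [schottky_dist i j hij]
    have : 1 / Real.sqrt 3 < 1 := by rw [div_lt_one hs0]; exact h3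
    linarith
  · intro i j hij z hz
    have hb : 2 - 1 / Real.sqrt 3 ≤ ‖z - schottkyCenter j‖ := by
      have ht := dist_triangle (schottkyCenter j) z (schottkyCenter i)
      rw [← Complex.dist_eq, dist_comm]
      have h2 := schottky_dist j i hij.symm
      rw [Metric.mem_closedBall, dist_comm] at hz
      linarith [dist_comm z (schottkyCenter i)]
    fin_cases j
    · show schottkyMap 0 z ∈ ball (schottkyCenter 0) (1 / Real.sqrt 3)
      have hE : schottkyMap 0 z = schottkyCenter 0 + 1 / (3 * (z - schottkyCenter 0)) := by
        simp only [schottkyMap, schottkyCenter, Matrix.cons_val_zero]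
        congr 2
        field_simp
        linear_combination (-2 : ℂ) * hsc
      rw [hE]
      exact schottky_key _ z 1 (by simp) hb
    · show schottkyMap 1 z ∈ ball (schottkyCenter 1) (1 / Real.sqrt 3)
      have hE : schottkyMap 1 z = schottkyCenter 1 +
          Complex.exp (-2 * Real.pi * I / 3) / (3 * (z - schottkyCenter 1)) := by
        simp only [schottkyMap, schottkyCenter, Matrix.cons_val_one, Matrix.head_cons, Matrix.cons_val_zero]
        congr 2
        field_simp
        linear_combination hsc
      rw [hE]
      refine schottky_key _ z _ ?_ hb
      rw [Complex.norm_exp]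
      simp
    · show schottkyMap 2 z ∈ ball (schottkyCenter 2) (1 / Real.sqrt 3)
      have hE : schottkyMap 2 z = schottkyCenter 2 +
          Complex.exp (2 * Real.pi * I / 3) / (3 * (z - schottkyCenter 2)) := by
        simp only [schottkyMap, schottkyCenter, Matrix.cons_val_two, Matrix.tail_cons,
          Matrix.head_cons]
        congr 2
        field_simp
        linear_combination hsc
      rw [hE]
      refine schottky_key _ z _ ?_ hb
      rw [Complex.norm_exp]
      simp
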